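/- Assume Condition (ii) (H¹-convergence) and Condition (iii) (L²-stability). Then the first Ritz values of the discretised forms converge to the first eigenvalue: λ̃_n → λ₁ as n → ∞. -/

import Mathlib

set_option maxHeartbeats 1000000
open Filter Topology
open scoped RealInnerProductSpace

/-- A real sequence eventually bounded along an ultrafilter converges along it. -/
lemma aux_ultrafilter_real_limit (𝒰 : Ultrafilter ℕ) (f : ℕ → ℝ) (R : ℝ)
    (hb : ∀ᶠ n in (𝒰 : Filter ℕ), |f n| ≤ R) :
    ∃ c : ℝ, Tendsto f 𝒰 (𝓝 c) := by
  have hKc : IsCompact (Set.Icc (-R) R) := isCompact_Icc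
  have hmem : Set.Icc (-R) R ∈ Ultrafilter.map f 𝒰 := by
    refine Filter.mem_map.2 ?_
    filter_upwards [hb] with n hn
    simpa [Set.mem_Icc, abs_le] using hn
  obtain ⟨c, -, hc⟩ := hKc.ultrafilter_le_nhds (Ultrafilter.map f 𝒰)
    (le_principal_iff.2 hmem)
  exact ⟨c, hc⟩

/-- Weak limit along an ultrafilter of a bounded sequence in a Hilbert space. -/
lemma aux_weak_limit {V : Type*} [NormedAddCommGroup V] [InnerProductSpace ℝ V]
    [CompleteSpace V] (𝒰 : Ultrafilter ℕ) (v : ℕ → V) (R : ℝ)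
    (hb : ∀ᶠ n in (𝒰 : Filter ℕ), ‖v n‖ ≤ R) :
    ∃ z : V, ∀ u : V, Tendsto (fun n => ⟪v n, u⟫) 𝒰 (𝓝 ⟪z, u⟫) := by
  have hex : ∀ u : V, ∃ c : ℝ, Tendsto (fun n => ⟪v n, u⟫) 𝒰 (𝓝 c) := by
    intro u
    refine aux_ultrafilter_real_limit 𝒰 _ (R * ‖u‖) ?_
    filter_upwards [hb] with n hn
    calc |⟪v n, u⟫| ≤ ‖v n‖ * ‖u‖ := abs_real_inner_le_norm _ _
      _ ≤ R * ‖u‖ := by gcongr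
  choose F hF using hex
  have hadd : ∀ u w : V, F (u + w) = F u + F w := by
    intro u w
    refine tendsto_nhds_unique (hF (u + w)) ?_
    have := (hF u).add (hF w)
    simpa [inner_add_right] using this
  have hsmul : ∀ (c : ℝ) (u : V), F (c • u) = c * F u := by
    intro c u
    refine tendsto_nhds_unique (hF (c • u)) ?_
    have := (hF u).const_mul c
    simpa [real_inner_smul_right] using this
  let ℱ : V →ₗ[ℝ] ℝ :=
    { toFun := F, map_add' := hadd, map_smul' := hsmul }
  have hbdd : ∀ u : V, ‖ℱ u‖ ≤ R * ‖u‖ := by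
    intro u
    have h1 : Tendsto (fun n => |⟪v n, u⟫|) 𝒰 (𝓝 |F u|) := (hF u).abs
    have h2 : ∀ᶠ n in (𝒰 : Filter ℕ), |⟪v n, u⟫| ≤ R * ‖u‖ := by
      filter_upwards [hb] with n hn
      calc |⟪v n, u⟫| ≤ ‖v n‖ * ‖u‖ := abs_real_inner_le_norm _ _
        _ ≤ R * ‖u‖ := by gcongr
    rw [Real.norm_eq_abs]
    exact le_of_tendsto h1 h2
  let ℱ' : V →L[ℝ] ℝ := LinearMap.mkContinuous ℱ R hbdd
  refine ⟨(InnerProductSpace.toDual ℝ V).symm ℱ', fun u => ?_⟩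
  have : ⟪(InnerProductSpace.toDual ℝ V).symm ℱ', u⟫ = ℱ' u :=
    InnerProductSpace.toDual_symm_apply
  rw [this]
  exact hF u

/-- Strong limit along an ultrafilter of the image of a bounded sequence
under a compact operator. -/
lemma aux_strong_limit {V H : Type*} [NormedAddCommGroup V] [InnerProductSpace ℝ V]
    [NormedAddCommGroup H] [InnerProductSpace ℝ H]
    (𝒰 : Ultrafilter ℕ) (ι : V →L[ℝ] H) (hι : IsCompactOperator ι)
    (v : ℕ → V) (R : ℝ) (hR : 0 < R)
    (hb : ∀ᶠ n in (𝒰 : Filter ℕ), ‖v n‖ ≤ R) :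
    ∃ g : H, Tendsto (fun n => ι (v n)) 𝒰 (𝓝 g) := by
  obtain ⟨K, hK, hKmem⟩ := hι
  obtain ⟨r, hr, hball⟩ := Metric.mem_nhds_iff.1 hKmem
  set c : ℝ := r / (2 * R) with hc
  have hcpos : 0 < c := by positivity
  have hmem : K ∈ Ultrafilter.map (fun n => ι (c • v n)) 𝒰 := by
    refine Filter.mem_map.2 ?_
    filter_upwards [hb] with n hn
    have : ‖c • v n‖ < r := by
      rw [norm_smul, Real.norm_eq_abs, abs_of_pos hcpos]
      calc c * ‖v n‖ ≤ c * R := by gcongr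
        _ = r / 2 := by rw [hc, div_mul_eq_mul_div, mul_div_mul_right r 2 hR.ne']
        _ < r := by linarith
    exact hball (by simpa [Metric.mem_ball, dist_zero_right] using this)
  obtain ⟨x, -, hx⟩ := hK.ultrafilter_le_nhds _ (le_principal_iff.2 hmem)
  refine ⟨c⁻¹ • x, ?_⟩
  have h1 : Tendsto (fun n => c⁻¹ • ι (c • v n)) 𝒰 (𝓝 (c⁻¹ • x)) :=
    (Tendsto.const_smul hx c⁻¹)
  convert h1 using 2 with n
  rw [map_smul, smul_smul, inv_mul_cancel₀ (ne_of_gt hcpos), one_smul]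

/-- **Convergence of the first Ritz values.**  Under Condition (ii)
(H¹-convergence) and Condition (iii) (L²-stability), `λ̃ₙ → λ₁`. -/
theorem to_ritz_value_convergence
    {V H : Type*}
    [NormedAddCommGroup V] [InnerProductSpace ℝ V] [CompleteSpace V]
    [NormedAddCommGroup H] [InnerProductSpace ℝ H] [CompleteSpace H]
    (ι : V →L[ℝ] H) (hι_inj : Function.Injective ι)
    (hι_cpt : IsCompactOperator ι)
    (a0 a1 : V →ₗ[ℝ] V →ₗ[ℝ] ℝ)
    (ha0_symm : ∀ u v : V, a0 u v = a0 v u)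
    (ha1_symm : ∀ u v : V, a1 u v = a1 v u)
    (M : ℝ)
    (ha0_bdd : ∀ u v : V, |a0 u v| ≤ M * ‖u‖ * ‖v‖)
    (ha1_bdd : ∀ u v : V, |a1 u v| ≤ M * ‖u‖ * ‖v‖)
    (α : ℝ) (hα : 0 < α)
    (ha0_coer : ∀ v : V, α * ‖v‖ ^ 2 ≤ a0 v v)
    (ha1_coer : ∀ v : V, α * ‖v‖ ^ 2 ≤ a1 v v)
    (T : V →ₗ[ℝ] V) (CV CT : ℝ)
    (hT_bdd : ∀ v : V, ‖T v‖ ≤ CV * ‖v‖)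
    (hT_H : ∀ v : V, ‖ι (T v)‖ ≤ CT * ‖ι v‖)
    (S : ℕ → Submodule ℝ V) (hS_mono : Monotone S)
    (hS_ne : ∀ n, S n ≠ ⊥) (hS_fd : ∀ n, FiniteDimensional ℝ (S n))
    (lam1 : ℝ)
    (hlam1 : lam1 = sInf {x : ℝ | ∃ v : V, v ≠ 0 ∧
      x = ((a0 v v + a1 (T v) (T v)) / 2) / ‖ι v‖ ^ 2})
    (hdensity : sInf {x : ℝ | ∃ v : V, (∃ n, v ∈ S n) ∧ v ≠ 0 ∧
      x = ((a0 v v + a1 (T v) (T v)) / 2) / ‖ι v‖ ^ 2} = lam1)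
    (I : ℕ → V →ₗ[ℝ] V)
    (lamT : ℕ → ℝ)
    (hlamT : ∀ n, lamT n = sInf {x : ℝ | ∃ v : V, v ∈ S n ∧ v ≠ 0 ∧
      x = ((a0 v v + a1 (I n (T v)) (I n (T v))) / 2) / ‖ι v‖ ^ 2})
    -- Condition (ii): H¹-convergence of the interpolated transfer operator
    (hii : ∀ f : V, (∃ m, f ∈ S m) →
      Tendsto (fun n => ‖I n (T f) - T f‖) atTop (𝓝 0))
    -- Condition (iii): L²-stability
    (C : ℝ) (hC : 0 < C)
    (hiii : ∀ m : ℕ, ∀ n ≥ m, ∀ v ∈ S m, ‖ι (I n (T v))‖ ≤ C * ‖ι v‖)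
    :
    Tendsto lamT atTop (𝓝 lam1) := by
  classical
  obtain ⟨v0, hv0S, hv0⟩ := (Submodule.ne_bot_iff (S 0)).1 (hS_ne 0)
  -- positivity of `‖ι v‖` for `v ≠ 0`
  have hιv : ∀ v : V, v ≠ 0 → 0 < ‖ι v‖ := by
    intro v hv
    rw [norm_pos_iff]
    intro h
    exact hv (hι_inj (by simpa using h))
  have hv0norm : 0 < ‖v0‖ := norm_pos_iff.2 hv0
  have hCιpos : 0 < ‖ι‖ := by
    by_contra h
    push_neg at h
    have h0 : ‖ι‖ = 0 := le_antisymm h (norm_nonneg ι)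
    have := ι.le_opNorm v0
    rw [h0, zero_mul] at this
    exact absurd (le_antisymm this (norm_nonneg _)) (ne_of_gt (hιv v0 hv0))
  set Cι := ‖ι‖ with hCιdef
  have hCV0 : 0 ≤ CV := by
    have h1 := hT_bdd v0
    have h2 := norm_nonneg (T v0)
    nlinarith
  set β := α / (2 * Cι ^ 2) with hβ
  have hβpos : 0 < β := div_pos hα (by nlinarith)
  -- every Rayleigh-type quotient is bounded below by β
  have hquot : ∀ (v : V), v ≠ 0 → ∀ b : ℝ, 0 ≤ b →
      β ≤ ((a0 v v + b) / 2) / ‖ι v‖ ^ 2 := by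
    intro v hv b hb
    have h2 : 0 < ‖ι v‖ ^ 2 := pow_pos (hιv v hv) 2
    rw [le_div_iff₀ h2]
    have h1 : ‖ι v‖ ^ 2 ≤ Cι ^ 2 * ‖v‖ ^ 2 := by
      have := ι.le_opNorm v
      nlinarith [norm_nonneg (ι v), norm_nonneg v]
    have h3 : β * ‖ι v‖ ^ 2 ≤ β * (Cι ^ 2 * ‖v‖ ^ 2) := by gcongr
    have h4 : β * (Cι ^ 2 * ‖v‖ ^ 2) = α * ‖v‖ ^ 2 / 2 := by
      field_simp [hβ]
      rw [hβ]; field_simp [hCιpos.ne']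
    have h5 := ha0_coer v
    linarith
  -- the three sets
  set sFull := {x : ℝ | ∃ v : V, v ≠ 0 ∧
      x = ((a0 v v + a1 (T v) (T v)) / 2) / ‖ι v‖ ^ 2} with hsFull
  set sDen := {x : ℝ | ∃ v : V, (∃ n, v ∈ S n) ∧ v ≠ 0 ∧
      x = ((a0 v v + a1 (T v) (T v)) / 2) / ‖ι v‖ ^ 2} with hsDen
  set sRitz := fun n => {x : ℝ | ∃ v : V, v ∈ S n ∧ v ≠ 0 ∧
      x = ((a0 v v + a1 (I n (T v)) (I n (T v))) / 2) / ‖ι v‖ ^ 2} with hsRitz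
  have ha1nn : ∀ u : V, (0:ℝ) ≤ a1 u u := fun u =>
    le_trans (by positivity) (ha1_coer u)
  have ha0nn : ∀ u : V, (0:ℝ) ≤ a0 u u := fun u =>
    le_trans (by positivity) (ha0_coer u)
  have hFull_lb : ∀ x ∈ sFull, β ≤ x := by
    rintro x ⟨v, hv, rfl⟩
    exact hquot v hv _ (ha1nn _)
  have hDen_lb : ∀ x ∈ sDen, β ≤ x := by
    rintro x ⟨v, -, hv, rfl⟩
    exact hquot v hv _ (ha1nn _)
  have hRitz_lb : ∀ n, ∀ x ∈ sRitz n, β ≤ x := by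
    rintro n x ⟨v, -, hv, rfl⟩
    exact hquot v hv _ (ha1nn _)
  have hFull_ne : sFull.Nonempty := ⟨_, v0, hv0, rfl⟩
  have hDen_ne : sDen.Nonempty := ⟨_, v0, ⟨0, hv0S⟩, hv0, rfl⟩
  have hRitz_ne : ∀ n, (sRitz n).Nonempty := by
    intro n
    obtain ⟨w, hwS, hw⟩ := (Submodule.ne_bot_iff (S n)).1 (hS_ne n)
    exact ⟨_, w, hwS, hw, rfl⟩
  have hlam1_lb : β ≤ lam1 := by
    rw [hlam1]
    exact le_csInf hFull_ne hFull_lb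
  have hlam1pos : 0 < lam1 := lt_of_lt_of_le hβpos hlam1_lb
  have hlam1_le : ∀ v : V, v ≠ 0 →
      lam1 ≤ ((a0 v v + a1 (T v) (T v)) / 2) / ‖ι v‖ ^ 2 := by
    intro v hv
    rw [hlam1]
    exact csInf_le ⟨β, hFull_lb⟩ ⟨v, hv, rfl⟩
  have hlamT_le : ∀ n, ∀ v ∈ S n, v ≠ 0 →
      lamT n ≤ ((a0 v v + a1 (I n (T v)) (I n (T v))) / 2) / ‖ι v‖ ^ 2 := by
    intro n v hvS hv
    rw [hlamT n]
    exact csInf_le ⟨β, hRitz_lb n⟩ ⟨v, hvS, hv, rfl⟩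
  -- ## Upper bound
  have claim_up : ∀ ε : ℝ, 0 < ε → ∀ᶠ n in atTop, lamT n < lam1 + ε := by
    intro ε hε
    have h1 : sInf sDen < lam1 + ε := by rw [hdensity]; linarith
    obtain ⟨x, ⟨v, ⟨m, hvm⟩, hvne, rfl⟩, hxlt⟩ := exists_lt_of_csInf_lt hDen_ne h1
    -- convergence of the discretised quotient at the fixed `v`
    have hd : Tendsto (fun n => ‖I n (T v) - T v‖) atTop (𝓝 0) := hii v ⟨m, hvm⟩
    have herr : Tendsto
        (fun n => 2 * a1 (T v) (I n (T v) - T v)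
          + a1 (I n (T v) - T v) (I n (T v) - T v)) atTop (𝓝 0) := by
      have hb : ∀ n, ‖2 * a1 (T v) (I n (T v) - T v)
          + a1 (I n (T v) - T v) (I n (T v) - T v)‖
          ≤ 2 * (M * ‖T v‖) * ‖I n (T v) - T v‖
            + M * ‖I n (T v) - T v‖ * ‖I n (T v) - T v‖ := by
        intro n
        have h1 := ha1_bdd (T v) (I n (T v) - T v)
        have h2 := ha1_bdd (I n (T v) - T v) (I n (T v) - T v)
        rw [Real.norm_eq_abs]
        calc |2 * a1 (T v) (I n (T v) - T v)
            + a1 (I n (T v) - T v) (I n (T v) - T v)|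
            ≤ 2 * |a1 (T v) (I n (T v) - T v)|
              + |a1 (I n (T v) - T v) (I n (T v) - T v)| := by
              have := abs_add_le (2 * a1 (T v) (I n (T v) - T v))
                (a1 (I n (T v) - T v) (I n (T v) - T v))
              rw [abs_mul] at this
              simpa using this
          _ ≤ 2 * (M * ‖T v‖ * ‖I n (T v) - T v‖)
              + M * ‖I n (T v) - T v‖ * ‖I n (T v) - T v‖ := by linarith
          _ = 2 * (M * ‖T v‖) * ‖I n (T v) - T v‖
              + M * ‖I n (T v) - T v‖ * ‖I n (T v) - T v‖ := by ring
      refine squeeze_zero_norm hb ?_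
      have := ((hd.const_mul (2 * (M * ‖T v‖))).add
        ((hd.const_mul M).mul hd))
      simpa using this
    have ha1tend : Tendsto (fun n => a1 (I n (T v)) (I n (T v))) atTop
        (𝓝 (a1 (T v) (T v))) := by
      have heq : ∀ n, a1 (I n (T v)) (I n (T v))
          = a1 (T v) (T v) + (2 * a1 (T v) (I n (T v) - T v)
            + a1 (I n (T v) - T v) (I n (T v) - T v)) := by
        intro n
        set d := I n (T v) - T v with hdd
        have hIn : I n (T v) = T v + d := by rw [hdd]; abel
        rw [hIn]
        simp only [map_add, LinearMap.add_apply]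
        rw [ha1_symm d (T v)]
        ring
      have h0 : Tendsto (fun n => a1 (T v) (T v)
          + (2 * a1 (T v) (I n (T v) - T v)
            + a1 (I n (T v) - T v) (I n (T v) - T v))) atTop
          (𝓝 (a1 (T v) (T v) + 0)) := tendsto_const_nhds.add herr
      rw [add_zero] at h0
      exact Tendsto.congr (fun n => (heq n).symm) h0
    have hqtend : Tendsto
        (fun n => ((a0 v v + a1 (I n (T v)) (I n (T v))) / 2) / ‖ι v‖ ^ 2)
        atTop (𝓝 (((a0 v v + a1 (T v) (T v)) / 2) / ‖ι v‖ ^ 2)) :=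
      (((tendsto_const_nhds.add ha1tend).div_const 2).div_const _)
    have hev := hqtend.eventually_lt_const hxlt
    filter_upwards [hev, eventually_ge_atTop m] with n hn hmn
    exact lt_of_le_of_lt (hlamT_le n v (hS_mono hmn hvm) hvne) hn
  -- ## Lower bound
  have claim_low : ∀ ε : ℝ, 0 < ε → ∀ᶠ n in atTop, lam1 - ε < lamT n := by
    intro ε hε
    by_contra hcon
    have hfreq : ∃ᶠ n in atTop, lamT n ≤ lam1 - ε := by
      rw [Filter.not_eventually] at hcon
      exact hcon.mono (fun n hn => not_lt.1 hn)
    have hNB : (atTop ⊓ 𝓟 {n | lamT n ≤ lam1 - ε}).NeBot :=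
      frequently_iff_neBot.1 hfreq
    obtain ⟨𝒰, h𝒰⟩ := Ultrafilter.exists_le (atTop ⊓ 𝓟 {n | lamT n ≤ lam1 - ε})
    have h𝒰top : (𝒰 : Filter ℕ) ≤ atTop := h𝒰.trans inf_le_left
    have hP𝒰 : {n | lamT n ≤ lam1 - ε} ∈ 𝒰 :=
      le_principal_iff.1 (h𝒰.trans inf_le_right)
    -- normalized near-minimizers
    set Q : ℕ → V → Prop := fun n u => u ∈ S n ∧ ‖ι u‖ = 1 ∧
      (a0 u u + a1 (I n (T u)) (I n (T u))) / 2 < lam1 - ε / 2 with hQdef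
    have hQex : ∀ n, lamT n ≤ lam1 - ε → ∃ u, Q n u := by
      intro n hn
      have h1 : sInf (sRitz n) < lam1 - ε / 2 := by
        rw [← hlamT n]; linarith
      obtain ⟨x, ⟨v, hvS, hvne, rfl⟩, hxlt⟩ := exists_lt_of_csInf_lt (hRitz_ne n) h1
      set c := ‖ι v‖⁻¹ with hcdef
      have hcpos : 0 < c := inv_pos.2 (hιv v hvne)
      refine ⟨c • v, Submodule.smul_mem _ c hvS, ?_, ?_⟩
      · rw [map_smul, norm_smul, Real.norm_eq_abs, abs_of_pos hcpos, hcdef]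
        exact inv_mul_cancel₀ (ne_of_gt (hιv v hvne))
      · have e0 : a0 (c • v) (c • v) = c ^ 2 * a0 v v := by
          simp only [map_smul, LinearMap.smul_apply, smul_eq_mul]
          ring
        have e1 : a1 (I n (T (c • v))) (I n (T (c • v)))
            = c ^ 2 * a1 (I n (T v)) (I n (T v)) := by
          simp only [map_smul, LinearMap.smul_apply, smul_eq_mul]
          ring
        rw [e0, e1]
        have hn2 : (0:ℝ) < ‖ι v‖ ^ 2 := pow_pos (hιv v hvne) 2
        have : (c ^ 2 * a0 v v + c ^ 2 * a1 (I n (T v)) (I n (T v))) / 2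
            = ((a0 v v + a1 (I n (T v)) (I n (T v))) / 2) / ‖ι v‖ ^ 2 := by
          have hne : ‖ι v‖ ≠ 0 := ne_of_gt (hιv v hvne)
          rw [hcdef]
          field_simp
        rw [this]
        exact hxlt
    set v_ : ℕ → V := fun n => if h : ∃ u, Q n u then h.choose else 0 with hv_def
    have hQ : ∀ᶠ n in (𝒰 : Filter ℕ), Q n (v_ n) := by
      filter_upwards [hP𝒰] with n hn
      have h := hQex n hn
      rw [hv_def]
      simp only [dif_pos h]
      exact h.choose_spec
    -- uniform bounds
    set R := Real.sqrt (2 * lam1 / α) with hRdef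
    have hRpos : 0 < R := Real.sqrt_pos.2 (by positivity)
    have hnum_bds : ∀ n u, Q n u → ‖u‖ ≤ R ∧ ‖I n (T u)‖ ≤ R := by
      intro n u hu
      obtain ⟨-, -, h3⟩ := hu
      have h4 := ha0_coer u
      have h5 := ha1_coer (I n (T u))
      have h6 := ha0nn u
      have h7 := ha1nn (I n (T u))
      constructor
      · rw [hRdef]
        refine (Real.le_sqrt (norm_nonneg u)
          (div_nonneg (by linarith) (le_of_lt hα))).2 ?_
        rw [le_div_iff₀ hα]
        nlinarith
      · rw [hRdef]
        refine (Real.le_sqrt (norm_nonneg (I n (T u)))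
          (div_nonneg (by linarith) (le_of_lt hα))).2 ?_
        rw [le_div_iff₀ hα]
        nlinarith
    have hbv : ∀ᶠ n in (𝒰 : Filter ℕ), ‖v_ n‖ ≤ R :=
      hQ.mono fun n hn => (hnum_bds n _ hn).1
    have hbw : ∀ᶠ n in (𝒰 : Filter ℕ), ‖I n (T (v_ n))‖ ≤ R :=
      hQ.mono fun n hn => (hnum_bds n _ hn).2
    -- weak limits
    obtain ⟨vl, hvl⟩ := aux_weak_limit 𝒰 v_ R hbv
    obtain ⟨w, hw⟩ := aux_weak_limit 𝒰 (fun n => I n (T (v_ n))) R hbw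
    -- strong H-limit of ι v_n, identified with ι vl
    obtain ⟨g, hg⟩ := aux_strong_limit 𝒰 ι hι_cpt v_ R hRpos hbv
    have hgvl : g = ι vl := by
      refine ext_inner_right ℝ (fun y => ?_)
      have h1 : Tendsto (fun n => ⟪ι (v_ n), y⟫) 𝒰 (𝓝 ⟪g, y⟫) :=
        hg.inner tendsto_const_nhds
      have h2 : Tendsto (fun n => ⟪ι (v_ n), y⟫) 𝒰 (𝓝 ⟪ι vl, y⟫) := by
        have h3 := hvl (ContinuousLinearMap.adjoint ι y)
        have h4 : ∀ n, ⟪v_ n, ContinuousLinearMap.adjoint ι y⟫ = ⟪ι (v_ n), y⟫ :=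
          fun n => ContinuousLinearMap.adjoint_inner_right ι (v_ n) y
        have h5 : ⟪vl, ContinuousLinearMap.adjoint ι y⟫ = ⟪ι vl, y⟫ :=
          ContinuousLinearMap.adjoint_inner_right ι vl y
        rw [← h5]
        exact h3.congr h4
      exact tendsto_nhds_unique h1 h2
    rw [hgvl] at hg
    -- norm of ι vl is 1
    have hnorm1 : ‖ι vl‖ = 1 := by
      refine tendsto_nhds_unique hg.norm ?_
      refine tendsto_const_nhds.congr' ?_
      filter_upwards [hQ] with n hn
      exact hn.2.1.symm
    have hvlne : vl ≠ 0 := by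
      intro h
      rw [h] at hnorm1
      simp at hnorm1
    -- vl lies in the closure of the union of the Sₙ
    have hvlW : vl ∈ (⨆ n, S n).topologicalClosure := by
      rw [← Submodule.orthogonal_orthogonal_eq_closure]
      rw [Submodule.mem_orthogonal]
      intro u hu
      have hz : ∀ᶠ n in (𝒰 : Filter ℕ), ⟪v_ n, u⟫ = 0 := by
        filter_upwards [hQ] with n hn
        have : v_ n ∈ (⨆ k, S k : Submodule ℝ V) :=
          Submodule.mem_iSup_of_mem n hn.1
        exact (Submodule.mem_orthogonal _ u).1 hu _ this
      have h1 : Tendsto (fun n => ⟪v_ n, u⟫) 𝒰 (𝓝 0) :=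
        tendsto_const_nhds.congr' (hz.mono fun n hn => hn.symm)
      have h2 := hvl u
      have h3 : ⟪vl, u⟫ = 0 := tendsto_nhds_unique h2 h1
      rw [real_inner_comm] at h3
      exact h3
    have hApprox : ∀ δ : ℝ, 0 < δ → ∃ f : V, (∃ m, f ∈ S m) ∧ ‖vl - f‖ < δ := by
      intro δ hδ
      have h1 : vl ∈ closure (↑(⨆ n, S n) : Set V) := by
        rw [← Submodule.topologicalClosure_coe]
        exact hvlW
      obtain ⟨f, hfmem, hfd⟩ := Metric.mem_closure_iff.1 h1 δ hδ
      refine ⟨f, ?_, by rwa [← dist_eq_norm]⟩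
      have := (Submodule.mem_iSup_of_chain ⟨S, hS_mono⟩ f).1 hfmem
      exact this
    -- strong H-convergence of the interpolants to ι (T vl)
    have hIstrong : Tendsto (fun n => ι (I n (T (v_ n)))) 𝒰 (𝓝 (ι (T vl))) := by
      rw [Metric.tendsto_nhds]
      intro δ hδ
      set D := C * (1 + Cι) + Cι + Cι * CV + 1 with hDdef
      have hDpos : 0 < D := by positivity
      set δ' := δ / (2 * D) with hδ'def
      have hδ'pos : 0 < δ' := by positivity
      obtain ⟨f, ⟨m, hfm⟩, hfcl⟩ := hApprox δ' hδ'pos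
      have E2 : ∀ᶠ n in (𝒰 : Filter ℕ), m ≤ n := h𝒰top (eventually_ge_atTop m)
      have E3 : ∀ᶠ n in (𝒰 : Filter ℕ), ‖ι (v_ n) - ι vl‖ < δ' := by
        have := Metric.tendsto_nhds.1 hg δ' hδ'pos
        exact this.mono fun n hn => by rwa [dist_eq_norm] at hn
      have E4 : ∀ᶠ n in (𝒰 : Filter ℕ), ‖I n (T f) - T f‖ < δ' :=
        h𝒰top ((hii f ⟨m, hfm⟩).eventually_lt_const hδ'pos)
      filter_upwards [hQ, E2, E3, E4] with n hQn hge h3 h4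
      rw [dist_eq_norm]
      have key : ι (I n (T (v_ n))) - ι (T vl)
          = ι (I n (T (v_ n - f))) + ι (I n (T f) - T f) + ι (T (f - vl)) := by
        simp only [map_sub]
        abel
      rw [key]
      have t1 : ‖ι (I n (T (v_ n - f)))‖ ≤ C * ‖ι (v_ n - f)‖ :=
        hiii n n le_rfl (v_ n - f) (Submodule.sub_mem _ hQn.1 (hS_mono hge hfm))
      have t1b : ‖ι (v_ n - f)‖ ≤ δ' + Cι * δ' := by
        have : ι (v_ n - f) = (ι (v_ n) - ι vl) + ι (vl - f) := by
          simp only [map_sub]; abel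
        rw [this]
        refine le_trans (norm_add_le _ _) ?_
        have hb2 : ‖ι (vl - f)‖ ≤ Cι * ‖vl - f‖ := ι.le_opNorm _
        have hb3 : Cι * ‖vl - f‖ ≤ Cι * δ' := by
          apply mul_le_mul_of_nonneg_left (le_of_lt hfcl) (le_of_lt hCιpos)
        linarith
      have t2 : ‖ι (I n (T f) - T f)‖ ≤ Cι * δ' := by
        refine le_trans (ι.le_opNorm _) ?_
        exact mul_le_mul_of_nonneg_left (le_of_lt h4) (le_of_lt hCιpos)
      have t3 : ‖ι (T (f - vl))‖ ≤ Cι * (CV * δ') := by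
        refine le_trans (ι.le_opNorm _) ?_
        refine mul_le_mul_of_nonneg_left ?_ (le_of_lt hCιpos)
        refine le_trans (hT_bdd _) ?_
        rw [norm_sub_rev]
        exact mul_le_mul_of_nonneg_left (le_of_lt hfcl) hCV0
      have hsum : ‖ι (I n (T (v_ n - f))) + ι (I n (T f) - T f) + ι (T (f - vl))‖
          ≤ C * (δ' + Cι * δ') + Cι * δ' + Cι * (CV * δ') := by
        refine le_trans (norm_add_le _ _) ?_
        refine add_le_add (le_trans (norm_add_le _ _) (add_le_add ?_ t2)) t3
        exact le_trans t1 (mul_le_mul_of_nonneg_left t1b (le_of_lt hC))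
      refine lt_of_le_of_lt hsum ?_
      have : C * (δ' + Cι * δ') + Cι * δ' + Cι * (CV * δ') = δ' * (D - 1) := by
        rw [hDdef]; ring
      rw [this]
      have h6 : δ' * (D - 1) < δ' * (2 * D) := by
        apply mul_lt_mul_of_pos_left _ hδ'pos
        linarith
      have h7 : δ' * (2 * D) = δ := by
        rw [hδ'def]; field_simp
      linarith
    -- identify w with T vl
    have hwTvl : w = T vl := by
      apply hι_inj
      refine ext_inner_right ℝ (fun y => ?_)
      have h1 : Tendsto (fun n => ⟪ι (I n (T (v_ n))), y⟫) 𝒰 (𝓝 ⟪ι w, y⟫) := by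
        have h3 := hw (ContinuousLinearMap.adjoint ι y)
        have h4 : ∀ n, ⟪I n (T (v_ n)), ContinuousLinearMap.adjoint ι y⟫
            = ⟪ι (I n (T (v_ n))), y⟫ :=
          fun n => ContinuousLinearMap.adjoint_inner_right ι _ y
        have h5 : ⟪w, ContinuousLinearMap.adjoint ι y⟫ = ⟪ι w, y⟫ :=
          ContinuousLinearMap.adjoint_inner_right ι w y
        rw [← h5]
        exact h3.congr h4
      have h2 : Tendsto (fun n => ⟪ι (I n (T (v_ n))), y⟫) 𝒰 (𝓝 ⟪ι (T vl), y⟫) :=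
        hIstrong.inner tendsto_const_nhds
      exact tendsto_nhds_unique h1 h2
    -- weak lower semicontinuity of the two quadratic forms
    have hrep : ∀ (b : V →ₗ[ℝ] V →ₗ[ℝ] ℝ), (∀ u v : V, |b u v| ≤ M * ‖u‖ * ‖v‖) →
        ∀ z : V, ∃ y : V, ∀ u : V, b z u = ⟪y, u⟫ := by
      intro b hb z
      have hbz : ∀ u : V, ‖b z u‖ ≤ (M * ‖z‖) * ‖u‖ := by
        intro u
        rw [Real.norm_eq_abs]
        calc |b z u| ≤ M * ‖z‖ * ‖u‖ := hb z u
          _ = (M * ‖z‖) * ‖u‖ := by ring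
      set B : V →L[ℝ] ℝ := LinearMap.mkContinuous (b z) (M * ‖z‖) hbz with hB
      refine ⟨(InnerProductSpace.toDual ℝ V).symm B, fun u => ?_⟩
      have : ⟪(InnerProductSpace.toDual ℝ V).symm B, u⟫ = B u :=
        InnerProductSpace.toDual_symm_apply
      rw [this]
      rfl
    have hlsc0 : Tendsto (fun n => a0 vl (v_ n)) 𝒰 (𝓝 (a0 vl vl)) := by
      obtain ⟨y, hy⟩ := hrep a0 ha0_bdd vl
      have h1 : ∀ n, a0 vl (v_ n) = ⟪v_ n, y⟫ := by
        intro n; rw [hy, real_inner_comm]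
      have h2 : a0 vl vl = ⟪vl, y⟫ := by rw [hy, real_inner_comm]
      rw [h2]
      exact (hvl y).congr (fun n => (h1 n).symm)
    have hlsc1 : Tendsto (fun n => a1 (T vl) (I n (T (v_ n)))) 𝒰
        (𝓝 (a1 (T vl) (T vl))) := by
      obtain ⟨y, hy⟩ := hrep a1 ha1_bdd (T vl)
      have h1 : ∀ n, a1 (T vl) (I n (T (v_ n))) = ⟪I n (T (v_ n)), y⟫ := by
        intro n; rw [hy, real_inner_comm]
      have h2 : a1 (T vl) (T vl) = ⟪w, y⟫ := by rw [hy, real_inner_comm, hwTvl]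
      rw [h2]
      exact (hw y).congr (fun n => (h1 n).symm)
    -- the eventual lower bounds
    have E5 : ∀ᶠ n in (𝒰 : Filter ℕ), a0 vl vl - ε / 8 < a0 vl (v_ n) :=
      hlsc0.eventually_const_lt (by linarith)
    have E6 : ∀ᶠ n in (𝒰 : Filter ℕ),
        a1 (T vl) (T vl) - ε / 8 < a1 (T vl) (I n (T (v_ n))) :=
      hlsc1.eventually_const_lt (by linarith)
    -- final contradiction
    have hlamle : lam1 ≤ (a0 vl vl + a1 (T vl) (T vl)) / 2 := by
      have := hlam1_le vl hvlne
      rwa [hnorm1, one_pow, div_one] at this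
    have hfinal : ∀ᶠ n in (𝒰 : Filter ℕ), False := by
      filter_upwards [hQ, E5, E6] with n hQn h5 h6
      have hexp0 : 0 ≤ a0 (v_ n - vl) (v_ n - vl) := ha0nn _
      have hexp0' : a0 (v_ n - vl) (v_ n - vl)
          = a0 (v_ n) (v_ n) - 2 * a0 vl (v_ n) + a0 vl vl := by
        simp only [map_sub, LinearMap.sub_apply]
        rw [ha0_symm (v_ n) vl]
        ring
      have hexp1 : 0 ≤ a1 (I n (T (v_ n)) - T vl) (I n (T (v_ n)) - T vl) :=
        ha1nn _
      have hexp1' : a1 (I n (T (v_ n)) - T vl) (I n (T (v_ n)) - T vl)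
          = a1 (I n (T (v_ n))) (I n (T (v_ n)))
            - 2 * a1 (T vl) (I n (T (v_ n))) + a1 (T vl) (T vl) := by
        simp only [map_sub, LinearMap.sub_apply]
        rw [ha1_symm (I n (T (v_ n))) (T vl)]
        ring
      have h7 := hQn.2.2
      rw [hexp0'] at hexp0
      rw [hexp1'] at hexp1
      linarith
    exact (Ultrafilter.neBot 𝒰).ne (Filter.eventually_false_iff_eq_bot.1 hfinal)
  -- ## combine
  rw [Metric.tendsto_nhds]
  intro ε hε
  filter_upwards [claim_up ε hε, claim_low ε hε] with n h1 h2
  rw [Real.dist_eq, abs_lt]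
  constructor <;> linarith
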